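/- Let φ be the ℂ-algebra homomorphism from the polynomial ring ℂ[z_S, z_T, z₁₂, z₂₃, z₃₁, z₂₁, z₃₂, z₁₃] to the group algebra ℂ[ℤ⁹] (the AddMonoidAlgebra of ℤ⁹ over ℂ) sending z_S to the basis element of S, z_T to the basis element of T, and each z_{ij} to the basis element of P_{ij}. Then the kernel of φ is the principal ideal generated by z_S·z_T − z₁₂·z₂₃·z₃₁. -/

import Mathlib

/-- The eight distinguished elements of `ℤ⁹` (coordinates ordered
`(a₁,b₁,c₁,a₂,a₃,b₂,b₃,c₂,c₃)`), listed in the variable order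
`S, T, P₁₂, P₂₃, P₃₁, P₂₁, P₃₂, P₁₃`:
`S = e_{a₂}+e_{b₂}+e_{c₂}`, `T = e_{a₃}+e_{b₃}+e_{c₃}`, `P₁₂ = e_{a₂}+e_{b₃}`,
`P₂₃ = e_{b₂}+e_{c₃}`, `P₃₁ = e_{c₂}+e_{a₃}`, `P₂₁ = e_{b₁}`, `P₃₂ = e_{c₁}`,
`P₁₃ = e_{a₁}`. -/
def bzGens : Fin 8 → Fin 9 → ℤ :=
  ![![0, 0, 0, 1, 0, 1, 0, 1, 0],  -- S
    ![0, 0, 0, 0, 1, 0, 1, 0, 1],  -- T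
    ![0, 0, 0, 1, 0, 0, 1, 0, 0],  -- P₁₂
    ![0, 0, 0, 0, 0, 1, 0, 0, 1],  -- P₂₃
    ![0, 0, 0, 0, 1, 0, 0, 1, 0],  -- P₃₁
    ![0, 1, 0, 0, 0, 0, 0, 0, 0],  -- P₂₁
    ![0, 0, 1, 0, 0, 0, 0, 0, 0],  -- P₃₂
    ![1, 0, 0, 0, 0, 0, 0, 0, 0]]  -- P₁₃

/-- The `ℂ`-algebra map `φ : ℂ[z_S, z_T, z₁₂, z₂₃, z₃₁, z₂₁, z₃₂, z₁₃] → ℂ[ℤ⁹]`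
sending each variable to the corresponding basis element of the group algebra. -/
noncomputable def phiBZ : MvPolynomial (Fin 8) ℂ →ₐ[ℂ] AddMonoidAlgebra ℂ (Fin 9 → ℤ) :=
  MvPolynomial.aeval fun i => AddMonoidAlgebra.of' ℂ (Fin 9 → ℤ) (bzGens i)

open MvPolynomial Finsupp

open MvPolynomial Finsupp
def Amap (v : Fin 8 →₀ ℕ) : Fin 9 → ℤ := ∑ i : Fin 8, (v i : ℤ) • bzGens i
lemma Amap_apply (v : Fin 8 →₀ ℕ) (j : Fin 9) :
    Amap v j = ∑ i : Fin 8, (v i : ℤ) * bzGens i j := by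
  simp [Amap, Finset.sum_apply, Pi.smul_apply, smul_eq_mul]
open MvPolynomial Finsupp
lemma Amap_inj {m m' : Fin 8 →₀ ℕ} (hm : m 0 = 0 ∨ m 1 = 0) (hm' : m' 0 = 0 ∨ m' 1 = 0)
    (h : Amap m = Amap m') : m = m' := by
  have e : ∀ j : Fin 9, ∑ i : Fin 8, (m i : ℤ) * bzGens i j
      = ∑ i : Fin 8, (m' i : ℤ) * bzGens i j := by
    intro j; rw [← Amap_apply, ← Amap_apply, h]
  have e0 := e 0; have e1 := e 1; have e2 := e 2; have e3 := e 3; have e4 := e 4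
  have e5 := e 5; have e6 := e 6; have e7 := e 7; have e8 := e 8
  simp only [Fin.sum_univ_eight,
    show bzGens 0 0 = 0 from by decide,
    show bzGens 0 1 = 0 from by decide,
    show bzGens 0 2 = 0 from by decide,
    show bzGens 0 3 = 1 from by decide,
    show bzGens 0 4 = 0 from by decide,
    show bzGens 0 5 = 1 from by decide,
    show bzGens 0 6 = 0 from by decide,
    show bzGens 0 7 = 1 from by decide,
    show bzGens 0 8 = 0 from by decide,
    show bzGens 1 0 = 0 from by decide,
    show bzGens 1 1 = 0 from by decide,
    show bzGens 1 2 = 0 from by decide,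
    show bzGens 1 3 = 0 from by decide,
    show bzGens 1 4 = 1 from by decide,
    show bzGens 1 5 = 0 from by decide,
    show bzGens 1 6 = 1 from by decide,
    show bzGens 1 7 = 0 from by decide,
    show bzGens 1 8 = 1 from by decide,
    show bzGens 2 0 = 0 from by decide,
    show bzGens 2 1 = 0 from by decide,
    show bzGens 2 2 = 0 from by decide,
    show bzGens 2 3 = 1 from by decide,
    show bzGens 2 4 = 0 from by decide,
    show bzGens 2 5 = 0 from by decide,
    show bzGens 2 6 = 1 from by decide,
    show bzGens 2 7 = 0 from by decide,
    show bzGens 2 8 = 0 from by decide,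
    show bzGens 3 0 = 0 from by decide,
    show bzGens 3 1 = 0 from by decide,
    show bzGens 3 2 = 0 from by decide,
    show bzGens 3 3 = 0 from by decide,
    show bzGens 3 4 = 0 from by decide,
    show bzGens 3 5 = 1 from by decide,
    show bzGens 3 6 = 0 from by decide,
    show bzGens 3 7 = 0 from by decide,
    show bzGens 3 8 = 1 from by decide,
    show bzGens 4 0 = 0 from by decide,
    show bzGens 4 1 = 0 from by decide,
    show bzGens 4 2 = 0 from by decide,
    show bzGens 4 3 = 0 from by decide,
    show bzGens 4 4 = 1 from by decide,
    show bzGens 4 5 = 0 from by decide,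
    show bzGens 4 6 = 0 from by decide,
    show bzGens 4 7 = 1 from by decide,
    show bzGens 4 8 = 0 from by decide,
    show bzGens 5 0 = 0 from by decide,
    show bzGens 5 1 = 1 from by decide,
    show bzGens 5 2 = 0 from by decide,
    show bzGens 5 3 = 0 from by decide,
    show bzGens 5 4 = 0 from by decide,
    show bzGens 5 5 = 0 from by decide,
    show bzGens 5 6 = 0 from by decide,
    show bzGens 5 7 = 0 from by decide,
    show bzGens 5 8 = 0 from by decide,
    show bzGens 6 0 = 0 from by decide,
    show bzGens 6 1 = 0 from by decide,
    show bzGens 6 2 = 1 from by decide,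
    show bzGens 6 3 = 0 from by decide,
    show bzGens 6 4 = 0 from by decide,
    show bzGens 6 5 = 0 from by decide,
    show bzGens 6 6 = 0 from by decide,
    show bzGens 6 7 = 0 from by decide,
    show bzGens 6 8 = 0 from by decide,
    show bzGens 7 0 = 1 from by decide,
    show bzGens 7 1 = 0 from by decide,
    show bzGens 7 2 = 0 from by decide,
    show bzGens 7 3 = 0 from by decide,
    show bzGens 7 4 = 0 from by decide,
    show bzGens 7 5 = 0 from by decide,
    show bzGens 7 6 = 0 from by decide,
    show bzGens 7 7 = 0 from by decide,
    show bzGens 7 8 = 0 from by decide,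
    mul_zero, mul_one, zero_add, add_zero] at e0 e1 e2 e3 e4 e5 e6 e7 e8
  have h0 : m 0 = m' 0 := by omega
  have h1 : m 1 = m' 1 := by omega
  have h2 : m 2 = m' 2 := by omega
  have h3 : m 3 = m' 3 := by omega
  have h4 : m 4 = m' 4 := by omega
  have h5 : m 5 = m' 5 := by omega
  have h6 : m 6 = m' 6 := by omega
  have h7 : m 7 = m' 7 := by omega
  ext i
  fin_cases i <;> assumption
lemma prod_single_aux {α : Type*} (s : Finset α) (a : α → Fin 9 → ℤ) :
    (∏ i ∈ s, (AddMonoidAlgebra.single (a i) (1:ℂ)) : AddMonoidAlgebra ℂ (Fin 9 → ℤ)) =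
      AddMonoidAlgebra.single (∑ i ∈ s, a i) 1 := by
  classical
  induction s using Finset.induction_on with
  | empty => simp [AddMonoidAlgebra.one_def]
  | insert _ _ h ih =>
      rw [Finset.prod_insert h, ih, AddMonoidAlgebra.single_mul_single,
        Finset.sum_insert h, one_mul]

lemma phiBZ_monomial (v : Fin 8 →₀ ℕ) (c : ℂ) :
    phiBZ (monomial v c) = AddMonoidAlgebra.single (Amap v) c := by
  rw [monomial_eq, Finsupp.prod_fintype _ _ (fun i => pow_zero _)]
  simp only [phiBZ, map_mul, map_prod, map_pow, aeval_C, aeval_X,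
    AddMonoidAlgebra.of'_apply, AddMonoidAlgebra.single_pow, one_pow]
  rw [prod_single_aux]
  have h2 : (algebraMap ℂ (AddMonoidAlgebra ℂ (Fin 9 → ℤ))) c = AddMonoidAlgebra.single 0 c := rfl
  rw [h2, AddMonoidAlgebra.single_mul_single, mul_one, zero_add]
  have h3 : (∑ i : Fin 8, v i • bzGens i) = Amap v := by
    simp [Amap, natCast_zsmul]
  rw [h3]

lemma phiBZ_gen_zero :
    phiBZ (X 0 * X 1 - X 2 * X 3 * X 4 : MvPolynomial (Fin 8) ℂ) = 0 := by
  simp only [map_sub, map_mul, phiBZ, aeval_X, AddMonoidAlgebra.of'_apply,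
    AddMonoidAlgebra.single_mul_single, one_mul, sub_eq_zero]
  congr 1
  decide
lemma exists_nf (m : Fin 8 →₀ ℕ) :
    ∃ m' : Fin 8 →₀ ℕ, (m' 0 = 0 ∨ m' 1 = 0) ∧
      (monomial m (1:ℂ) - monomial m' 1) ∈
        Ideal.span {(X 0 * X 1 - X 2 * X 3 * X 4 : MvPolynomial (Fin 8) ℂ)} := by
  classical
  set k := min (m 0) (m 1) with hk
  have hle0 : k ≤ m 0 := min_le_left _ _
  have hle1 : k ≤ m 1 := min_le_right _ _
  have hor : k = m 0 ∨ k = m 1 := min_choice _ _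
  set base : Fin 8 →₀ ℕ := m - Finsupp.single 0 k - Finsupp.single 1 k with hbase
  have hb : ∀ i, base i = m i - (Finsupp.single (0:Fin 8) k) i - (Finsupp.single (1:Fin 8) k) i := by
    intro i; simp [hbase, Finsupp.tsub_apply]
  have hm : m = base + Finsupp.single 0 k + Finsupp.single 1 k := by
    ext i
    have h0 := hb i
    by_cases hi0 : (0 : Fin 8) = i
    · subst hi0
      simp [Finsupp.add_apply, Finsupp.single_apply] at h0 ⊢
      omega
    · by_cases hi1 : (1 : Fin 8) = i
      · subst hi1
        simp [Finsupp.add_apply, Finsupp.single_apply] at h0 ⊢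
        omega
      · simp only [Finsupp.add_apply, Finsupp.single_apply, if_neg hi0, if_neg hi1] at h0 ⊢
        omega
  refine ⟨base + Finsupp.single 2 k + Finsupp.single 3 k + Finsupp.single 4 k, ?_, ?_⟩
  · have h0 := hb 0
    have h1 := hb 1
    simp [Finsupp.add_apply, Finsupp.single_apply] at h0 h1 ⊢
    omega
  · have h1 : (monomial m (1:ℂ)) = monomial base 1 * (X 0 * X 1) ^ k := by
      rw [hm, mul_pow, X_pow_eq_monomial, X_pow_eq_monomial, monomial_mul, monomial_mul,
        one_mul, add_assoc]
      norm_num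
    have h2 : (monomial (base + Finsupp.single 2 k + Finsupp.single 3 k + Finsupp.single 4 k) (1:ℂ))
        = monomial base 1 * (X 2 * X 3 * X 4) ^ k := by
      rw [mul_pow, mul_pow, X_pow_eq_monomial, X_pow_eq_monomial, X_pow_eq_monomial,
        monomial_mul, monomial_mul, monomial_mul, one_mul, one_mul, add_assoc, add_assoc]
      norm_num
      exact (add_assoc _ _ _).symm
    rw [h1, h2, ← mul_sub]
    exact Ideal.mem_span_singleton.2
      (Dvd.dvd.mul_left (sub_dvd_pow_sub_pow _ _ k) _)

open MvPolynomial in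
/-- The kernel of `φ` is the principal ideal generated by `z_S·z_T − z₁₂·z₂₃·z₃₁`. -/
theorem stmt_5 :
    RingHom.ker phiBZ =
      Ideal.span {(X 0 * X 1 - X 2 * X 3 * X 4 : MvPolynomial (Fin 8) ℂ)} := by
  classical
  set g : MvPolynomial (Fin 8) ℂ := X 0 * X 1 - X 2 * X 3 * X 4 with hg
  have hIker : Ideal.span {g} ≤ RingHom.ker phiBZ := by
    rw [Ideal.span_le, Set.singleton_subset_iff]
    exact phiBZ_gen_zero
  refine le_antisymm ?_ hIker
  intro p hp
  rw [RingHom.mem_ker] at hp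
  choose nf hnf1 hnf2 using exists_nf
  set r : MvPolynomial (Fin 8) ℂ := ∑ u ∈ p.support, C (coeff u p) * monomial (nf u) 1 with hr
  have hpr : p - r ∈ Ideal.span {g} := by
    have hps : p = ∑ u ∈ p.support, C (coeff u p) * monomial u 1 := by
      conv_lhs => rw [← p.support_sum_monomial_coeff]
      refine Finset.sum_congr rfl fun u _ => ?_
      rw [C_mul_monomial, mul_one]
    rw [hps, hr, ← Finset.sum_sub_distrib]
    refine Ideal.sum_mem _ fun u _ => ?_
    rw [← mul_sub]
    exact Ideal.mul_mem_left _ _ (hnf2 u)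
  have hr0 : phiBZ r = 0 := by
    have h1 : phiBZ (p - r) = 0 := hIker hpr
    rw [map_sub, hp, zero_sub, neg_eq_zero] at h1
    exact h1.symm ▸ rfl
  have hsupp : ∀ u ∈ r.support, u 0 = 0 ∨ u 1 = 0 := by
    intro u hu
    have h2 := MvPolynomial.support_sum hu
    rw [Finset.mem_biUnion] at h2
    obtain ⟨v, -, hv⟩ := h2
    rw [C_mul_monomial, mul_one] at hv
    have h3 := MvPolynomial.support_monomial_subset hv
    rw [Finset.mem_singleton] at h3
    subst h3
    exact hnf1 v
  have hrz : r = 0 := by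
    by_contra hne
    obtain ⟨u0, hu0⟩ := (MvPolynomial.support_nonempty.2 hne)
    have hphi : phiBZ r = ∑ u ∈ r.support, AddMonoidAlgebra.single (Amap u) (coeff u r) := by
      conv_lhs => rw [← r.support_sum_monomial_coeff]
      rw [map_sum]
      exact Finset.sum_congr rfl fun u _ => phiBZ_monomial u _
    have heval : (phiBZ r).coeff (Amap u0) = coeff u0 r := by
      rw [hphi, AddMonoidAlgebra.coeff_sum, Finsupp.finset_sum_apply]
      rw [Finset.sum_eq_single_of_mem u0 hu0]
      · rw [AddMonoidAlgebra.coeff_single, Finsupp.single_apply, if_pos rfl]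
      · intro v hv hvne
        rw [AddMonoidAlgebra.coeff_single, Finsupp.single_apply, if_neg]
        intro hAv
        exact hvne (Amap_inj (hsupp v hv) (hsupp u0 hu0) hAv)
    rw [hr0] at heval
    exact (MvPolynomial.mem_support_iff.1 hu0) heval.symm
  have hfin : p = p - r := by rw [hrz, sub_zero]
  rw [hfin]
  exact hpr
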